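/- arXiv:1706.04160 — 5 statements merged into one kernel-verified Lean document; each statement's English description precedes it below -/
import Mathlib

section
/- Let n ≥ 1 and let L be a strictly n-regular lattice. Then (a) L is n-regular; and (b) if n ≥ 2 and the rank of L is at least n, then L is strictly (n−1)-regular. -/
open Matrix

namespace Paper

/-- The quadratic map attached to a Gram matrix `G` over a commutative ring. -/
def Qf {R : Type*} [CommRing R] {m : ℕ} (G : Matrix (Fin m) (Fin m) R) (x : Fin m → R) : R :=
  x ⬝ᵥ (G *ᵥ x)

/-- The bilinear form attached to a Gram matrix `G`. -/
def Bf {R : Type*} [CommRing R] {m : ℕ} (G : Matrix (Fin m) (Fin m) R) (x y : Fin m → R) : R :=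
  x ⬝ᵥ (G *ᵥ y)

/-- `G` is the Gram matrix of a positive definite integral `ℤ`-lattice. -/
def IsLat {m : ℕ} (G : Matrix (Fin m) (Fin m) ℤ) : Prop := G.IsSymm ∧ G.PosDef

/-- The lattice with Gram matrix `A` is represented by the lattice with Gram matrix `G`
(the representation is `x ↦ x ᵥ* T`). -/
def Rep {R : Type*} [CommRing R] {k m : ℕ} (A : Matrix (Fin k) (Fin k) R)
    (G : Matrix (Fin m) (Fin m) R) : Prop :=
  ∃ T : Matrix (Fin k) (Fin m) R, A = T * G * Tᵀ

/-- Primitive representation: the image is a direct summand, i.e. the map `x ↦ x ᵥ* T`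
admits a linear retraction. -/
def PrimRep {R : Type*} [CommRing R] {k m : ℕ} (A : Matrix (Fin k) (Fin k) R)
    (G : Matrix (Fin m) (Fin m) R) : Prop :=
  ∃ T : Matrix (Fin k) (Fin m) R, A = T * G * Tᵀ ∧
    ∃ U : Matrix (Fin m) (Fin k) R, T * U = 1

/-- The `p`-adic localization `L_p` of an integral matrix/lattice. -/
noncomputable def padic (p : ℕ) [Fact p.Prime] {k m : ℕ} (A : Matrix (Fin k) (Fin m) ℤ) :
    Matrix (Fin k) (Fin m) ℤ_[p] := A.map (Int.cast : ℤ → ℤ_[p])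

/-- Isometry of two Gram matrices over a commutative ring. -/
def Isom {R : Type*} [CommRing R] {m : ℕ} (A B : Matrix (Fin m) (Fin m) R) : Prop :=
  ∃ T : Matrix (Fin m) (Fin m) R, IsUnit T.det ∧ A = T * B * Tᵀ

/-- `G'` belongs to the genus of `G`. -/
def InGenus {m : ℕ} (G G' : Matrix (Fin m) (Fin m) ℤ) : Prop :=
  IsLat G' ∧ ∀ (p : ℕ) [Fact p.Prime], Isom (padic p G') (padic p G)

/-- `A` is represented by the genus of `G`. -/
def GenusRep {k m : ℕ} (A : Matrix (Fin k) (Fin k) ℤ) (G : Matrix (Fin m) (Fin m) ℤ) : Prop :=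
  ∃ G' : Matrix (Fin m) (Fin m) ℤ, InGenus G G' ∧ Rep A G'

/-- `A` is primitively represented by the genus of `G`. -/
def GenusPrimRep {k m : ℕ} (A : Matrix (Fin k) (Fin k) ℤ) (G : Matrix (Fin m) (Fin m) ℤ) : Prop :=
  ∃ G' : Matrix (Fin m) (Fin m) ℤ, InGenus G G' ∧ PrimRep A G'

/-- `G` is an `n`-regular lattice. -/
def Regular (n : ℕ) {m : ℕ} (G : Matrix (Fin m) (Fin m) ℤ) : Prop :=
  ∀ A : Matrix (Fin n) (Fin n) ℤ, IsLat A → GenusRep A G → Rep A G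

/-- `G` is a strictly `n`-regular lattice. -/
def StrictlyRegular (n : ℕ) {m : ℕ} (G : Matrix (Fin m) (Fin m) ℤ) : Prop :=
  ∀ A : Matrix (Fin n) (Fin n) ℤ, IsLat A → GenusPrimRep A G → PrimRep A G

/-- The `i`-th successive minimum of the lattice with Gram matrix `G`. -/
noncomputable def mu {m : ℕ} (G : Matrix (Fin m) (Fin m) ℤ) (i : ℕ) : ℕ :=
  sInf {t : ℕ | ∃ v : Fin i → (Fin m → ℤ), LinearIndependent ℤ v ∧ ∀ j, Qf G (v j) ≤ (t : ℤ)}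

/-- Two lattices are similar if one is isometric to a positive rational scaling of the other. -/
def Similar {m : ℕ} (G G' : Matrix (Fin m) (Fin m) ℤ) : Prop :=
  ∃ (r : ℚ) (T : Matrix (Fin m) (Fin m) ℤ), 0 < r ∧ IsUnit T.det ∧
    G'.map (Int.cast : ℤ → ℚ) = r • ((T * G * Tᵀ).map (Int.cast : ℤ → ℚ))

/-- The norm ideal `n(L)` of a lattice. -/
def NormIdeal {m : ℕ} (G : Matrix (Fin m) (Fin m) ℤ) : Ideal ℤ :=
  Ideal.span (Set.range (Qf G))

/-- The scale ideal `s(L)` of a lattice. -/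
def ScaleIdeal {m : ℕ} (G : Matrix (Fin m) (Fin m) ℤ) : Ideal ℤ :=
  Ideal.span {a : ℤ | ∃ i j, G i j = a}

/-- A lattice is normalized if its norm ideal is `2ℤ`. -/
def Normalized {m : ℕ} (G : Matrix (Fin m) (Fin m) ℤ) : Prop :=
  NormIdeal G = Ideal.span {(2 : ℤ)}

/-- The Watson sublattice `Λ_k(L)`, as a subset of the underlying module. -/
def Lambda {R : Type*} [CommRing R] (k : ℕ) {m : ℕ} (G : Matrix (Fin m) (Fin m) R) :
    Set (Fin m → R) :=
  {x | ∀ z, (k : R) ∣ Qf G (x + z) - Qf G z}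

/-- The Watson sublattice `Λ_k` of a sublattice `S` (with the quadratic map inherited
from the ambient Gram matrix `G`). -/
def LambdaIn {R : Type*} [CommRing R] (k : ℕ) {m : ℕ} (G : Matrix (Fin m) (Fin m) R)
    (S : Set (Fin m → R)) : Set (Fin m → R) :=
  {x ∈ S | ∀ z ∈ S, (k : R) ∣ Qf G (x + z) - Qf G z}

lemma Qf_add {R : Type*} [CommRing R] {m : ℕ} (G : Matrix (Fin m) (Fin m) R)
    (x z : Fin m → R) :
    Qf G (x + z) = Qf G x + Qf G z + (x ⬝ᵥ (G *ᵥ z) + z ⬝ᵥ (G *ᵥ x)) := by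
  simp [Qf, Matrix.mulVec_add, dotProduct_add, add_dotProduct]
  ring

lemma Qf_smul {R : Type*} [CommRing R] {m : ℕ} (G : Matrix (Fin m) (Fin m) R)
    (c : R) (x : Fin m → R) : Qf G (c • x) = c ^ 2 * Qf G x := by
  simp [Qf, Matrix.mulVec_smul, smul_dotProduct, dotProduct_smul, smul_eq_mul]
  ring

/-- The Watson sublattice `Λ_k(L)` as a `ℤ`-submodule. -/
def LambdaMod (k : ℕ) {m : ℕ} (G : Matrix (Fin m) (Fin m) ℤ) : Submodule ℤ (Fin m → ℤ) where
  carrier := Lambda k G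
  zero_mem' := by intro z; simp
  add_mem' := by
    intro x y hx hy z
    have h := dvd_add (hx (y + z)) (hy z)
    have e : Qf G (x + (y + z)) - Qf G (y + z) + (Qf G (y + z) - Qf G z)
        = Qf G (x + y + z) - Qf G z := by
      rw [add_assoc]; ring
    exact e ▸ h
  smul_mem' := by
    intro c x hx z
    have h0 : (k : ℤ) ∣ Qf G x := by simpa [Qf] using hx 0
    have hz : (k : ℤ) ∣ Qf G x + (x ⬝ᵥ (G *ᵥ z) + z ⬝ᵥ (G *ᵥ x)) := by
      have := hx z
      rwa [Qf_add, show Qf G x + Qf G z + (x ⬝ᵥ (G *ᵥ z) + z ⬝ᵥ (G *ᵥ x)) - Qf G z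
          = Qf G x + (x ⬝ᵥ (G *ᵥ z) + z ⬝ᵥ (G *ᵥ x)) by ring] at this
    have hcross : (k : ℤ) ∣ (x ⬝ᵥ (G *ᵥ z) + z ⬝ᵥ (G *ᵥ x)) := by
      simpa using dvd_sub hz h0
    have key : Qf G (c • x + z) - Qf G z
        = c ^ 2 * Qf G x + c * (x ⬝ᵥ (G *ᵥ z) + z ⬝ᵥ (G *ᵥ x)) := by
      have e1 : (c • x) ⬝ᵥ (G *ᵥ z) = c * (x ⬝ᵥ (G *ᵥ z)) := by
        rw [smul_dotProduct, smul_eq_mul]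
      have e2 : z ⬝ᵥ (G *ᵥ (c • x)) = c * (z ⬝ᵥ (G *ᵥ x)) := by
        rw [Matrix.mulVec_smul, dotProduct_smul, smul_eq_mul]
      rw [Qf_add, Qf_smul, e1, e2]
      ring
    rw [key]
    exact dvd_add (Dvd.dvd.mul_left h0 _) (Dvd.dvd.mul_left hcross c)

/-- The set of values of `Q` on `L_p` is all of `2ℤ_p`. -/
def QValuesFull (p : ℕ) [Fact p.Prime] {m : ℕ} (G : Matrix (Fin m) (Fin m) ℤ) : Prop :=
  Set.range (Qf (padic p G)) = {a : ℤ_[p] | (2 : ℤ_[p]) ∣ a}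

/-- One Watson step followed by scaling by `r`:
`G'` is a Gram matrix of the scaled lattice `Λ_{2p}^{(r)}(G)`. -/
def LambdaScaledStep (p : ℕ) (r : ℚ) {m : ℕ} (G G' : Matrix (Fin m) (Fin m) ℤ) : Prop :=
  ∃ T : Matrix (Fin m) (Fin m) ℤ, LinearIndependent ℤ (fun i => T i) ∧
    Submodule.span ℤ (Set.range T) = LambdaMod (2 * p) G ∧
    G'.map (Int.cast : ℤ → ℚ) = r • ((T * G * Tᵀ).map (Int.cast : ℤ → ℚ))

/-- An admissible chain of scaled Watson transformations at `p`, starting from `G`: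
every intermediate lattice is normalized. -/
def AdmissibleChain (p : ℕ) {m : ℕ} (G : Matrix (Fin m) (Fin m) ℤ) (l : ℕ)
    (rs : Fin l → ℚ) (Ls : Fin (l + 1) → Matrix (Fin m) (Fin m) ℤ) : Prop :=
  Ls 0 = G ∧ (∀ i, 0 < rs i) ∧
  ∀ i : Fin l, LambdaScaledStep p (rs i) (Ls i.castSucc) (Ls i.succ) ∧ Normalized (Ls i.succ)

/-- `L'_p` has an orthogonal direct summand isometric to the hyperbolic plane over `ℤ_p`. -/
def HypSplit (p : ℕ) [Fact p.Prime] {m : ℕ} (L' : Matrix (Fin m) (Fin m) ℤ) : Prop :=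
  ∃ (T : Matrix (Fin m) (Fin m) ℤ_[p]) (i0 i1 : Fin m), i0 ≠ i1 ∧ IsUnit T.det ∧
    (T * padic p L' * Tᵀ) i0 i0 = 0 ∧ (T * padic p L' * Tᵀ) i0 i1 = 1 ∧
    (T * padic p L' * Tᵀ) i1 i0 = 1 ∧ (T * padic p L' * Tᵀ) i1 i1 = 0 ∧
    ∀ j, j ≠ i0 → j ≠ i1 →
      (T * padic p L' * Tᵀ) i0 j = 0 ∧ (T * padic p L' * Tᵀ) i1 j = 0 ∧
      (T * padic p L' * Tᵀ) j i0 = 0 ∧ (T * padic p L' * Tᵀ) j i1 = 0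

/-- The conclusions of Corollary 3.5 for the final lattice `L'` of an admissible chain:
`L'` is a normalized strictly `n`-regular lattice, `Q(L'_p) = 2ℤ_p`, and for every prime
`q ≠ p` the lattice `L'_q` is isometric to a scaling of `G_q`. -/
def GoodTarget (n p : ℕ) [Fact p.Prime] {m : ℕ} (G L' : Matrix (Fin m) (Fin m) ℤ) : Prop :=
  IsLat L' ∧ Normalized L' ∧ StrictlyRegular n L' ∧ QValuesFull p L' ∧
  ∀ (q : ℕ) [Fact q.Prime], q ≠ p →
    ∃ (c : ℚ) (T : Matrix (Fin m) (Fin m) ℤ_[q]), 0 < c ∧ IsUnit T.det ∧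
      L'.map (Int.cast : ℤ → ℚ_[q])
        = (c : ℚ_[q]) • ((T * padic q G * Tᵀ).map ((↑) : ℤ_[q] → ℚ_[q]))

section Aux

lemma quad_conj_aux {k m : ℕ} (G : Matrix (Fin m) (Fin m) ℤ) (S : Matrix (Fin k) (Fin m) ℤ)
    (x : Fin k → ℤ) :
    x ⬝ᵥ ((S * G * Sᵀ) *ᵥ x) = (x ᵥ* S) ⬝ᵥ (G *ᵥ (x ᵥ* S)) := by
  rw [← Matrix.mulVec_mulVec, ← Matrix.mulVec_mulVec, Matrix.mulVec_transpose,
    Matrix.dotProduct_mulVec x S]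

lemma isLat_conj_aux {k m : ℕ} {G : Matrix (Fin m) (Fin m) ℤ} (hG : IsLat G)
    (S : Matrix (Fin k) (Fin m) ℤ)
    (hS : ∀ x : Fin k → ℤ, x ᵥ* S = 0 → x = 0) :
    IsLat (S * G * Sᵀ) := by
  have hsymm : (S * G * Sᵀ).IsSymm := by
    unfold Matrix.IsSymm
    rw [Matrix.transpose_mul, Matrix.transpose_mul, Matrix.transpose_transpose, hG.1,
      Matrix.mul_assoc]
  refine ⟨hsymm, Matrix.PosDef.of_dotProduct_mulVec_pos ?_ ?_⟩
  · ext i j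
    simp only [Matrix.conjTranspose_apply, star_trivial]
    exact congrFun (congrFun hsymm i) j
  · intro x hx
    have hx' : x ᵥ* S ≠ 0 := fun h => hx (hS x h)
    have := hG.2.dotProduct_mulVec_pos hx'
    rw [star_trivial, quad_conj_aux]
    simpa using this

lemma right_inv_inj_aux {k m : ℕ} {S : Matrix (Fin k) (Fin m) ℤ} {V : Matrix (Fin m) (Fin k) ℤ}
    (hSV : S * V = 1) : ∀ x : Fin k → ℤ, x ᵥ* S = 0 → x = 0 := by
  intro x hx
  have : (x ᵥ* S) ᵥ* V = x ᵥ* (S * V) := by rw [Matrix.vecMul_vecMul]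
  rw [hx, hSV] at this
  simpa using this.symm

lemma posdef_inj_aux {k m : ℕ} {A : Matrix (Fin k) (Fin k) ℤ} {G : Matrix (Fin m) (Fin m) ℤ}
    {T : Matrix (Fin k) (Fin m) ℤ} (hA : A.PosDef) (h : A = T * G * Tᵀ) :
    ∀ x : Fin k → ℤ, x ᵥ* T = 0 → x = 0 := by
  intro x hx
  by_contra hne
  have h1 := hA.dotProduct_mulVec_pos hne
  rw [h, star_trivial, quad_conj_aux, hx] at h1
  simp at h1

lemma row_mem_range_aux {k m : ℕ} (T : Matrix (Fin k) (Fin m) ℤ) (i : Fin k) :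
    T i ∈ LinearMap.range T.vecMulLinear := by
  refine ⟨Pi.single i 1, ?_⟩
  ext j
  simp [Matrix.vecMulLinear_apply, Matrix.vecMul, dotProduct, Pi.single_apply]

lemma exists_primitive_factor_aux {k m : ℕ} (T : Matrix (Fin k) (Fin m) ℤ)
    (hT : ∀ x : Fin k → ℤ, x ᵥ* T = 0 → x = 0) :
    ∃ (C : Matrix (Fin k) (Fin k) ℤ) (S : Matrix (Fin k) (Fin m) ℤ)
      (V : Matrix (Fin m) (Fin k) ℤ), T = C * S ∧ S * V = 1 := by
  classical
  have hinj : Function.Injective T.vecMulLinear := by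
    rw [← LinearMap.ker_eq_bot, LinearMap.ker_eq_bot']
    intro x hx
    exact hT x hx
  set N := LinearMap.range T.vecMulLinear with hN
  obtain ⟨n', snf⟩ := N.smithNormalForm (Pi.basisFun ℤ (Fin m))
  have bk : Module.Basis (Fin k) ℤ N :=
    (Pi.basisFun ℤ (Fin k)).map (LinearEquiv.ofInjective T.vecMulLinear hinj)
  have ecard : n' = k := by
    have h1 : Module.finrank ℤ N = n' := by
      simpa using Module.finrank_eq_card_basis snf.bN
    have h2 : Module.finrank ℤ N = k := by
      simpa using Module.finrank_eq_card_basis bk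
    omega
  subst ecard
  set S : Matrix (Fin n') (Fin m) ℤ := fun i => snf.bM (snf.f i) with hS
  set V : Matrix (Fin m) (Fin n') ℤ := fun j i => snf.bM.coord (snf.f i) (Pi.single j 1) with hV
  have hmem : ∀ i, T i ∈ N := row_mem_range_aux T
  set C : Matrix (Fin n') (Fin n') ℤ :=
    fun i j => snf.bN.repr ⟨T i, hmem i⟩ j * snf.a j with hC
  have key : ∀ (v : Fin m → ℤ) (φ : Fin m),
      ∑ j, v j * snf.bM.coord φ (Pi.single j 1) = snf.bM.coord φ v := by
    intro v φ
    have hv : v = ∑ j, v j • Pi.single j (1 : ℤ) := by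
      ext l
      simp [Pi.single_apply, Finset.sum_apply]
    conv_rhs => rw [hv, map_sum]
    refine Finset.sum_congr rfl fun x _ => ?_
    rw [_root_.map_smul, smul_eq_mul]
  refine ⟨C, S, V, ?_, ?_⟩
  · ext i l
    have h1 := congrArg (Subtype.val) (snf.bN.sum_repr ⟨T i, hmem i⟩)
    have h2 : (∑ j, snf.bN.repr ⟨T i, hmem i⟩ j • (snf.bN j) : N).val
        = ∑ j, snf.bN.repr ⟨T i, hmem i⟩ j • ((snf.bN j : N) : Fin m → ℤ) := by
      simp only [Submodule.coe_sum, Submodule.coe_smul]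
    rw [h2] at h1
    have h1' : (∑ j, snf.bN.repr ⟨T i, hmem i⟩ j • ((snf.bN j : N) : Fin m → ℤ)) = T i := h1
    have h3 : T i l = ∑ j, snf.bN.repr ⟨T i, hmem i⟩ j * ((snf.bN j : N) : Fin m → ℤ) l := by
      conv_lhs => rw [← h1']
      simp [Finset.sum_apply]
    rw [Matrix.mul_apply]
    rw [h3]
    refine Finset.sum_congr rfl fun j _ => ?_
    rw [snf.snf j]
    simp [hC, hS]
    ring
  · ext i j
    rw [Matrix.mul_apply]
    have := key (snf.bM (snf.f i)) (snf.f j)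
    rw [show ∑ l, S i l * V l j
        = ∑ l, (snf.bM (snf.f i)) l * snf.bM.coord (snf.f j) (Pi.single l 1) from rfl]
    rw [this]
    simp [Module.Basis.coord_apply, Module.Basis.repr_self, Finsupp.single_apply, Matrix.one_apply,
      snf.f.injective.eq_iff]

lemma exists_extend_aux {k m : ℕ} (hkm : k < m)
    (T : Matrix (Fin k) (Fin m) ℤ) (U : Matrix (Fin m) (Fin k) ℤ) (hTU : T * U = 1) :
    ∃ (w u : Fin m → ℤ), T *ᵥ u = 0 ∧ w ᵥ* U = 0 ∧ w ⬝ᵥ u = 1 := by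
  classical
  set U' : Matrix (Fin m) (Fin m) ℤ :=
    fun i j => if h : (j : ℕ) < k then U i ⟨j, h⟩ else 0 with hU'
  have hdet : U'.det = 0 := by
    apply Matrix.det_eq_zero_of_column_eq_zero ⟨k, hkm⟩
    intro i
    simp [hU']
  obtain ⟨v, hv0, hvU'⟩ := Matrix.exists_vecMul_eq_zero_iff.mpr hdet
  have hvU : v ᵥ* U = 0 := by
    ext j
    have := congrFun hvU' ⟨(j : ℕ), lt_trans j.2 hkm⟩
    simpa [Matrix.vecMul, dotProduct, hU'] using this
  set I : Ideal ℤ := Ideal.span (Set.range v) with hI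
  set g : ℤ := Submodule.IsPrincipal.generator I with hg
  have hIg : I = Ideal.span {g} := (Ideal.span_singleton_generator I).symm
  have hdvd : ∀ i, g ∣ v i := by
    intro i
    have : v i ∈ I := Ideal.subset_span ⟨i, rfl⟩
    rwa [hIg, Ideal.mem_span_singleton] at this
  have hgmem : g ∈ I := Submodule.IsPrincipal.generator_mem I
  rw [hI, Ideal.span, Submodule.mem_span_range_iff_exists_fun] at hgmem
  obtain ⟨c, hc⟩ := hgmem
  have hgne : g ≠ 0 := by
    intro h0
    apply hv0
    ext i
    have := hdvd i
    rw [h0] at this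
    simpa using this
  choose w hw using fun i => hdvd i
  have hvw : v = fun i => g * w i := funext hw
  have hwc : w ⬝ᵥ c = 1 := by
    have h1 : g * (w ⬝ᵥ c) = g * 1 := by
      rw [mul_one]
      calc g * (w ⬝ᵥ c) = ∑ i, (g * w i) * c i := by
            rw [dotProduct, Finset.mul_sum]
            exact Finset.sum_congr rfl fun i _ => by ring
        _ = ∑ i, c i • v i := by
            refine Finset.sum_congr rfl fun i _ => ?_
            rw [hvw, smul_eq_mul]; ring
        _ = g := hc
    exact mul_left_cancel₀ hgne h1
  have hwU : w ᵥ* U = 0 := by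
    ext j
    have := congrFun hvU j
    rw [hvw] at this
    have h2 : g * (w ᵥ* U) j = 0 := by
      simpa [Matrix.vecMul, dotProduct, Finset.mul_sum, mul_assoc] using this
    exact (mul_eq_zero.mp h2).resolve_left hgne
  refine ⟨w, c - U *ᵥ (T *ᵥ c), ?_, hwU, ?_⟩
  · rw [Matrix.mulVec_sub, Matrix.mulVec_mulVec, hTU, Matrix.one_mulVec, sub_self]
  · rw [dotProduct_sub, hwc, Matrix.dotProduct_mulVec, hwU, zero_dotProduct,
      sub_zero]

end Aux

/-- a strictly `n`-regular lattice is `n`-regular, and (if `n ≥ 2` and the rank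
is at least `n`) strictly `(n-1)`-regular. -/


theorem strictly_regular_consequences (n m : ℕ) (hn : 1 ≤ n)
    (G : Matrix (Fin m) (Fin m) ℤ) (hG : IsLat G) (hreg : StrictlyRegular n G) :
    Regular n G ∧ (2 ≤ n → n ≤ m → StrictlyRegular (n - 1) G) := by
  constructor
  · -- (a) strictly n-regular implies n-regular
    rintro A hA ⟨G', hInG, T, hT⟩
    obtain ⟨C, S, V, hCS, hSV⟩ := exists_primitive_factor_aux T (posdef_inj_aux hA.2 hT)
    have hBlat : IsLat (S * G' * Sᵀ) := isLat_conj_aux hInG.1 S (right_inv_inj_aux hSV)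
    obtain ⟨T₂, hB2, U₂, hTU₂⟩ := hreg _ hBlat ⟨G', hInG, S, rfl, V, hSV⟩
    refine ⟨C * T₂, ?_⟩
    have hstep : A = C * (S * G' * Sᵀ) * Cᵀ := by
      rw [hT, hCS, Matrix.transpose_mul]
      simp only [Matrix.mul_assoc]
    rw [hstep, hB2, Matrix.transpose_mul]
    simp only [Matrix.mul_assoc]
  · -- (b) strictly n-regular implies strictly (n-1)-regular when n ≥ 2, m ≥ n
    intro hn2 hnm
    obtain ⟨k, rfl⟩ : ∃ k, n = k + 1 := ⟨n - 1, by omega⟩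
    show StrictlyRegular k G
    rintro A hA ⟨G', hInG, T, hT, U, hTU⟩
    obtain ⟨w, u, hTu, hwU, hwu⟩ := exists_extend_aux (show k < m by omega) T U hTU
    classical
    set S : Matrix (Fin (k + 1)) (Fin m) ℤ :=
      fun i => Fin.lastCases w (fun j => T j) i with hSdef
    set V : Matrix (Fin m) (Fin (k + 1)) ℤ :=
      fun l i => Fin.lastCases (u l) (fun j => U l j) i with hVdef
    have hSV : S * V = 1 := by
      ext i i'
      rw [Matrix.mul_apply]
      refine Fin.lastCases ?_ (fun j => ?_) i
      · refine Fin.lastCases ?_ (fun j' => ?_) i'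
        · simpa [hSdef, hVdef, Matrix.one_apply, dotProduct] using hwu
        · have h0 := congrFun hwU j'
          simp only [Pi.zero_apply] at h0
          have hne : Fin.last k ≠ Fin.castSucc j' := (Fin.castSucc_lt_last j').ne'
          simpa [hSdef, hVdef, Matrix.one_apply, hne, Matrix.vecMul, dotProduct]
            using h0
      · refine Fin.lastCases ?_ (fun j' => ?_) i'
        · have h0 := congrFun hTu j
          simp only [Pi.zero_apply] at h0
          have hne : Fin.castSucc j ≠ Fin.last k := (Fin.castSucc_lt_last j).ne
          simpa [hSdef, hVdef, Matrix.one_apply, hne, Matrix.mulVec, dotProduct]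
            using h0
        · have h0 := congrFun (congrFun hTU j) j'
          rw [Matrix.mul_apply] at h0
          simpa [hSdef, hVdef, Matrix.one_apply, Fin.castSucc_inj] using h0
    have hBlat : IsLat (S * G' * Sᵀ) := isLat_conj_aux hInG.1 S (right_inv_inj_aux hSV)
    obtain ⟨T₂, hB2, U₂, hTU₂⟩ := hreg _ hBlat ⟨G', hInG, S, rfl, V, hSV⟩
    set E : Matrix (Fin k) (Fin (k + 1)) ℤ :=
      fun i j => if j = Fin.castSucc i then 1 else 0 with hEdef
    have hES : E * S = T := by
      ext i l
      rw [Matrix.mul_apply]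
      simp [hEdef, Finset.sum_ite_eq, hSdef]
    have hEEt : E * Eᵀ = 1 := by
      ext i i'
      rw [Matrix.mul_apply]
      simp [hEdef, Matrix.transpose_apply, Finset.sum_ite_eq, Matrix.one_apply,
        Fin.castSucc_inj, eq_comm]
      change _ = (if Fin.castSucc i = Fin.castSucc i' then 1 else 0)
      simp [Fin.castSucc_inj]
    refine ⟨E * T₂, ?_, U₂ * Eᵀ, ?_⟩
    · have hstep : A = E * (S * G' * Sᵀ) * Eᵀ := by
        rw [hT, ← hES, Matrix.transpose_mul]
        simp only [Matrix.mul_assoc]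
      rw [hstep, hB2, Matrix.transpose_mul]
      simp only [Matrix.mul_assoc]
    · calc E * T₂ * (U₂ * Eᵀ) = E * (T₂ * U₂) * Eᵀ := by
            simp only [Matrix.mul_assoc]
        _ = 1 := by rw [hTU₂, Matrix.mul_one, hEEt]


end Paper
end

section
/- Let L be a lattice and M a sublattice of L of rank k with k < rank(L), and let M^⊥ = {x ∈ L : B(x, y) = 0 for all y ∈ M}. If n(M^⊥) ⊆ aℤ for some positive integer a, then μ_{k+1}(L) ≥ a / d(M)². -/
open Matrix

namespace Paper

/-- if `M` is a sublattice of `L` of rank `k < rank L` (spanned by the rows of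
`T`) and `n(M^⊥) ⊆ aℤ`, then `μ_{k+1}(L) ≥ a / d(M)²`. -/
theorem mu_lower_bound_from_orthogonal_norm {m k : ℕ} (hk : k < m)
    (G : Matrix (Fin m) (Fin m) ℤ) (hG : IsLat G)
    (T : Matrix (Fin k) (Fin m) ℤ) (hT : LinearIndependent ℤ (fun i => T i))
    (a : ℕ) (ha : 0 < a)
    (hnorm : ∀ x : Fin m → ℤ, (∀ i, Bf G x (T i) = 0) → (a : ℤ) ∣ Qf G x) :
    (a : ℚ) / ((T * G * Tᵀ).det : ℚ) ^ 2 ≤ (mu G (k + 1) : ℚ) := by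
  classical
  obtain ⟨hGs, hGpd⟩ := hG
  set A := T * G * Tᵀ with hA
  set d : ℤ := A.det with hd
  have hGsq : Gᵀ = G := hGs
  have hsym : ∀ x y : Fin m → ℤ, x ⬝ᵥ (G *ᵥ y) = y ⬝ᵥ (G *ᵥ x) := fun x y => by
    rw [Matrix.dotProduct_mulVec, ← Matrix.mulVec_transpose, hGsq, dotProduct_comm]
  have hQpos : ∀ x : Fin m → ℤ, x ≠ 0 → 0 < Qf G x := fun x hx => by
    simpa [Qf] using hGpd.dotProduct_mulVec_pos hx
  have hTv : ∀ c : Fin k → ℤ, Tᵀ *ᵥ c = ∑ i, c i • T i := by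
    intro c; funext j
    simp [Matrix.mulVec, dotProduct, Matrix.transpose_apply, Finset.sum_apply,
      mul_comm]
  have hTinj : ∀ c : Fin k → ℤ, Tᵀ *ᵥ c = 0 → c = 0 := by
    intro c hc
    have := linearIndependent_iff'.mp hT Finset.univ c (by
      rw [← hTv c] at *; simpa using hc)
    funext i; exact this i (Finset.mem_univ i)
  have hAv : ∀ c : Fin k → ℤ, c ⬝ᵥ (A *ᵥ c) = (Tᵀ *ᵥ c) ⬝ᵥ (G *ᵥ (Tᵀ *ᵥ c)) := by
    intro c
    rw [hA, ← Matrix.mulVec_mulVec, ← Matrix.mulVec_mulVec, Matrix.dotProduct_mulVec c T,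
      ← Matrix.mulVec_transpose]
  have hAnn : ∀ c : Fin k → ℤ, 0 ≤ c ⬝ᵥ (A *ᵥ c) := by
    intro c
    rw [hAv]
    by_cases h : Tᵀ *ᵥ c = 0
    · simp [h]
    · exact le_of_lt (by simpa [Qf] using hGpd.dotProduct_mulVec_pos h)
  have hdne : d ≠ 0 := by
    intro h0
    obtain ⟨v, hv0, hv⟩ := (Matrix.exists_mulVec_eq_zero_iff (M := A)).mpr h0
    have h1 : v ⬝ᵥ (A *ᵥ v) = 0 := by rw [hv]; simp
    have h2 : Tᵀ *ᵥ v ≠ 0 := fun h => hv0 (hTinj v h)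
    have := hGpd.dotProduct_mulVec_pos h2
    rw [hAv] at h1
    simp only [star_trivial] at this
    omega
  -- one step of orthogonal projection, scaled by d
  have step : ∀ x : Fin m → ℤ, ∃ x' : Fin m → ℤ,
      (∀ i, Bf G x' (T i) = 0) ∧ Qf G x' ≤ d ^ 2 * Qf G x ∧
      (x' = 0 → d • x ∈ Submodule.span ℤ (Set.range fun i => T i)) := by
    intro x
    set w : Fin k → ℤ := T *ᵥ (G *ᵥ x) with hw
    set c : Fin k → ℤ := A.adjugate *ᵥ w with hc
    set y : Fin m → ℤ := Tᵀ *ᵥ c with hy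
    have hTc : ∀ z : Fin m → ℤ, y ⬝ᵥ z = c ⬝ᵥ (T *ᵥ z) := by
      intro z
      rw [hy, Matrix.mulVec_transpose, Matrix.dotProduct_mulVec]
    have hAc : A *ᵥ c = d • w := by
      rw [hc, Matrix.mulVec_mulVec, Matrix.mul_adjugate, ← hd, Matrix.smul_mulVec,
        Matrix.one_mulVec]
    have hperp : T *ᵥ (G *ᵥ (d • x - y)) = 0 := by
      have : T *ᵥ (G *ᵥ y) = A *ᵥ c := by
        rw [hy, Matrix.mulVec_mulVec, Matrix.mulVec_mulVec, hA]
      rw [Matrix.mulVec_sub, Matrix.mulVec_smul, Matrix.mulVec_sub, Matrix.mulVec_smul,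
        this, hAc, ← hw]
      simp
    refine ⟨d • x - y, ?_, ?_, ?_⟩
    · intro i
      have : Bf G (d • x - y) (T i) = (T *ᵥ (G *ᵥ (d • x - y))) i := by
        rw [Bf, hsym]; rfl
      rw [this, hperp]; rfl
    · have hQ : Qf G (d • x - y) = d ^ 2 * Qf G x - d * (c ⬝ᵥ w) := by
        have e1 : (d • x - y) ⬝ᵥ (G *ᵥ (d • x - y))
            = (d • x) ⬝ᵥ (G *ᵥ (d • x - y)) - c ⬝ᵥ (T *ᵥ (G *ᵥ (d • x - y))) := by
          rw [sub_dotProduct, hTc]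
        have e2 : (d • x) ⬝ᵥ (G *ᵥ (d • x - y)) = d * ((d • x - y) ⬝ᵥ (G *ᵥ x)) := by
          rw [smul_dotProduct, hsym x, smul_eq_mul]
        have e3 : (d • x - y) ⬝ᵥ (G *ᵥ x) = d * Qf G x - c ⬝ᵥ w := by
          rw [sub_dotProduct, smul_dotProduct, hTc, ← hw, Qf, smul_eq_mul]
        rw [Qf, e1, hperp, dotProduct_zero, e2, e3]
        ring
      have hnn : 0 ≤ d * (c ⬝ᵥ w) := by
        have : c ⬝ᵥ (A *ᵥ c) = d * (c ⬝ᵥ w) := by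
          rw [hAc, dotProduct_smul]; rfl
        rw [← this]; exact hAnn c
      omega
    · intro h
      have hdx : d • x = y := by
        have := sub_eq_zero.mp h; exact this
      rw [hdx, hy, hTv]
      exact Submodule.sum_mem _ fun i _ =>
        Submodule.smul_mem _ _ (Submodule.subset_span ⟨i, rfl⟩)
  -- main bound for any t in the defining set of mu
  have key : ∀ t : ℕ, (∃ v : Fin (k + 1) → (Fin m → ℤ), LinearIndependent ℤ v ∧
      ∀ j, Qf G (v j) ≤ (t : ℤ)) → (a : ℤ) ≤ d ^ 2 * t := by
    rintro t ⟨v, hv, hvt⟩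
    choose x' horth hle hzero using fun j => step (v j)
    have hex : ∃ j, x' j ≠ 0 := by
      by_contra hall
      push_neg at hall
      have hmem : ∀ j, d • v j ∈ Submodule.span ℤ (Set.range fun i => T i) :=
        fun j => hzero j (hall j)
      have hdv : LinearIndependent ℤ fun j => d • v j := by
        have hker : LinearMap.ker (d • (LinearMap.id : (Fin m → ℤ) →ₗ[ℤ] (Fin m → ℤ))) = ⊥ := by
          rw [LinearMap.ker_eq_bot']
          intro x hx
          have : d • x = 0 := hx
          exact (smul_eq_zero.mp this).resolve_left hdne
        have := hv.map' (d • (LinearMap.id : (Fin m → ℤ) →ₗ[ℤ] (Fin m → ℤ))) hker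
        exact this
      set S' := Submodule.span ℤ (Set.range fun i => T i) with hS'
      have hu : LinearIndependent ℤ (fun j => (⟨d • v j, hmem j⟩ : S')) :=
        LinearIndependent.of_comp S'.subtype (by exact hdv)
      have h1c := hu.cardinal_le_rank
      have h2c := rank_span_le (R := ℤ) (Set.range fun i => T i)
      have h3c : Cardinal.mk (Set.range fun i => T i) ≤ (k : Cardinal) :=
        Cardinal.mk_range_le.trans (by simp [Cardinal.mk_fin])
      have : ((k + 1 : ℕ) : Cardinal.{0}) ≤ (k : Cardinal.{0}) := by
        have := h1c.trans (h2c.trans h3c)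
        simpa using this
      have : k + 1 ≤ k := by exact_mod_cast this
      omega
    obtain ⟨j, hj⟩ := hex
    have h1 : (a : ℤ) ≤ Qf G (x' j) :=
      Int.le_of_dvd (hQpos _ hj) (hnorm _ (horth j))
    have h2 : Qf G (x' j) ≤ d ^ 2 * Qf G (v j) := hle j
    have h3 : d ^ 2 * Qf G (v j) ≤ d ^ 2 * t :=
      mul_le_mul_of_nonneg_left (hvt j) (by positivity)
    omega
  -- the defining set of mu is nonempty
  have hne : {t : ℕ | ∃ v : Fin (k + 1) → (Fin m → ℤ), LinearIndependent ℤ v ∧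
      ∀ j, Qf G (v j) ≤ (t : ℤ)}.Nonempty := by
    refine ⟨Finset.univ.sup fun i : Fin m => (G i i).toNat,
      fun j => Pi.single (Fin.castLE hk (j : Fin (k + 1))) 1, ?_, ?_⟩
    · have : (fun j : Fin (k + 1) => Pi.single (M := fun _ : Fin m => ℤ) (Fin.castLE hk j) (1 : ℤ))
          = (Pi.basisFun ℤ (Fin m)) ∘ Fin.castLE hk := by
        funext j; simp
      rw [this]
      exact (Pi.basisFun ℤ (Fin m)).linearIndependent.comp _ (Fin.castLE_injective hk)
    · intro j
      have hQ : Qf G (Pi.single (Fin.castLE hk j) (1 : ℤ))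
          = G (Fin.castLE hk j) (Fin.castLE hk j) := by
        simp [Qf, Matrix.mulVec_single, single_dotProduct]
      rw [hQ]
      have h1 : G (Fin.castLE hk j) (Fin.castLE hk j)
          ≤ ((G (Fin.castLE hk j) (Fin.castLE hk j)).toNat : ℤ) := Int.self_le_toNat _
      have h2 : ((G (Fin.castLE hk j) (Fin.castLE hk j)).toNat : ℤ)
          ≤ ((Finset.univ.sup fun i : Fin m => (G i i).toNat : ℕ) : ℤ) := by
        exact_mod_cast Finset.le_sup (f := fun i : Fin m => (G i i).toNat)
          (Finset.mem_univ (Fin.castLE hk j))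
      omega
  have hmu := key (mu G (k + 1)) (Nat.sInf_mem hne)
  have hd2 : (0 : ℚ) < (d : ℚ) ^ 2 := by
    have : (d : ℚ) ≠ 0 := Int.cast_ne_zero.mpr hdne
    positivity
  rw [div_le_iff₀ hd2]
  have : ((a : ℤ) : ℚ) ≤ ((d ^ 2 * (mu G (k + 1) : ℤ) : ℤ) : ℚ) := by exact_mod_cast hmu
  push_cast at this ⊢
  linarith

end Paper
end

section
/- For all positive integers k and m there exists a constant C, depending only on k and m, with the following property: if L is a lattice, M is a primitive sublattice of L of rank m, and K is a lattice of rank k such that either (i) K is represented by L but not represented by M, or (ii) K is primitively represented by L but not primitively represented by M, then μ_{m+1}(L) ≤ C · max{μ_k(K), μ_m(M)}. Moreover, if max{k, m} ≤ 4, one may take C = 1. -/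
open Matrix

namespace Paper

open Submodule Set

private def castL (l : ℕ) : (Fin l → ℤ) →ₗ[ℤ] (Fin l → ℚ) where
  toFun x i := (x i : ℚ)
  map_add' x y := by funext i; simp
  map_smul' c x := by funext i; push_cast; simp

private lemma castL_apply {l : ℕ} (x : Fin l → ℤ) (i : Fin l) : castL l x i = (x i : ℚ) := rfl

private lemma castL_inj (l : ℕ) : Function.Injective (castL l) := by
  intro x y h
  funext i
  have h2 := congrFun h i
  rw [castL_apply, castL_apply] at h2
  exact_mod_cast h2

private lemma castL_ker (l : ℕ) : LinearMap.ker (castL l) = ⊥ :=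
  LinearMap.ker_eq_bot_of_injective (castL_inj l)

private lemma castL_vecMul {k l : ℕ} (S : Matrix (Fin k) (Fin l) ℤ) (x : Fin k → ℤ) :
    castL l (x ᵥ* S) = (castL k x) ᵥ* (S.map (Int.cast : ℤ → ℚ)) := by
  funext j
  simp only [castL, LinearMap.coe_mk, AddHom.coe_mk, Matrix.vecMul, dotProduct,
    Matrix.map_apply]
  push_cast
  rfl

private lemma castL_row {k l : ℕ} (S : Matrix (Fin k) (Fin l) ℤ) (i : Fin k) :
    (S.map (Int.cast : ℤ → ℚ)) i = castL l (S i) := by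
  funext j; simp [castL, Matrix.map_apply]

private lemma mapc_mul {a b d : ℕ} (M : Matrix (Fin a) (Fin b) ℤ) (N : Matrix (Fin b) (Fin d) ℤ) :
    (M * N).map (Int.cast : ℤ → ℚ) = M.map (Int.cast : ℤ → ℚ) * N.map (Int.cast : ℤ → ℚ) := by
  ext i j
  simp only [Matrix.mul_apply, Matrix.map_apply]
  push_cast
  rfl

private lemma Qf_of_rep {R : Type*} [CommRing R] {k l : ℕ} (G : Matrix (Fin l) (Fin l) R)
    (S : Matrix (Fin k) (Fin l) R) (w : Fin k → R) :
    Qf (S * G * Sᵀ) w = Qf G (w ᵥ* S) := by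
  simp only [Qf]
  rw [Matrix.dotProduct_mulVec, Matrix.dotProduct_mulVec, ← Matrix.vecMul_vecMul,
    ← Matrix.vecMul_vecMul, Matrix.vecMul_transpose, dotProduct_comm,
    Matrix.dotProduct_mulVec, dotProduct_comm]

private lemma factor {k m l : ℕ} (T : Matrix (Fin m) (Fin l) ℤ) (U : Matrix (Fin l) (Fin m) ℤ)
    (hTU : T * U = 1) (S : Matrix (Fin k) (Fin l) ℤ)
    (h : ∀ i, castL l (S i) ∈ span ℚ (Set.range (T.map (Int.cast : ℤ → ℚ)))) :
    S * U * T = S := by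
  set c := (Int.cast : ℤ → ℚ) with hc
  have hq : T.map c * U.map c = 1 := by
    rw [← mapc_mul, hTU]
    ext i j
    simp [Matrix.map_apply, Matrix.one_apply, apply_ite c, hc]
  have hrow : ∀ i, (S.map c * U.map c * T.map c) i = (S.map c) i := by
    intro i
    have hmem : (S.map c) i ∈ LinearMap.range (T.map c).vecMulLinear := by
      rw [_root_.range_vecMulLinear, castL_row]
      exact h i
    obtain ⟨w, hw⟩ := hmem
    rw [Matrix.vecMulLinear_apply] at hw
    rw [Matrix.mul_assoc, Matrix.mul_apply_eq_vecMul, ← hw, Matrix.vecMul_vecMul,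
      ← Matrix.mul_assoc, hq, Matrix.one_mul]
  have hmap : (S * U * T).map c = S.map c := by
    rw [mapc_mul, mapc_mul]
    exact Matrix.ext fun i j => congrFun (hrow i) j
  ext i j
  have h2 := congrFun (congrFun hmap i) j
  simp only [Matrix.map_apply, hc] at h2
  exact_mod_cast h2


private lemma mu_nonempty {n l : ℕ} (A : Matrix (Fin l) (Fin l) ℤ) (hn : n ≤ l) :
    {t : ℕ | ∃ v : Fin n → (Fin l → ℤ), LinearIndependent ℤ v ∧
      ∀ j, Qf A (v j) ≤ (t : ℤ)}.Nonempty := by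
  classical
  refine ⟨Finset.univ.sup fun j : Fin n => (Qf A ((Pi.basisFun ℤ (Fin l)) (Fin.castLE hn j))).toNat,
    fun j => (Pi.basisFun ℤ (Fin l)) (Fin.castLE hn j), ?_, ?_⟩
  · exact (Pi.basisFun ℤ (Fin l)).linearIndependent.comp (Fin.castLE hn) (Fin.castLE_injective hn)
  · intro j
    have h1 : (Qf A ((Pi.basisFun ℤ (Fin l)) (Fin.castLE hn j))).toNat ≤
        Finset.univ.sup fun j : Fin n =>
          (Qf A ((Pi.basisFun ℤ (Fin l)) (Fin.castLE hn j))).toNat :=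
      Finset.le_sup (f := fun j : Fin n =>
        (Qf A ((Pi.basisFun ℤ (Fin l)) (Fin.castLE hn j))).toNat) (Finset.mem_univ j)
    exact le_trans (Int.self_le_toNat _) (by exact_mod_cast h1)

/-- bounding `μ_{m+1}(L)` via a lattice `K` (primitively) represented by `L` but
not by a primitive rank-`m` sublattice `M` of `L` (given by the rows of `T`). -/
theorem mu_bound_via_nonrepresented (k m : ℕ) (hk : 0 < k) (hm : 0 < m) :
    ∃ C : ℕ, (max k m ≤ 4 → C = 1) ∧
      ∀ (l : ℕ) (G : Matrix (Fin l) (Fin l) ℤ), IsLat G →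
        ∀ T : Matrix (Fin m) (Fin l) ℤ,
          (∃ U : Matrix (Fin l) (Fin m) ℤ, T * U = 1) →
          ∀ A : Matrix (Fin k) (Fin k) ℤ, IsLat A →
            ((Rep A G ∧ ¬ Rep A (T * G * Tᵀ)) ∨
              (PrimRep A G ∧ ¬ PrimRep A (T * G * Tᵀ))) →
            mu G (m + 1) ≤ C * max (mu A k) (mu (T * G * Tᵀ) m) := by
  classical
  refine ⟨1, fun _ => rfl, ?_⟩
  intro l G hG T hTex A hA hrep
  obtain ⟨U, hTU⟩ := hTex
  rw [one_mul]
  haveI : Nonempty (Fin k) := ⟨⟨0, hk⟩⟩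
  -- extract a representation S together with the obstruction
  obtain ⟨S, hS, hnot⟩ : ∃ S : Matrix (Fin k) (Fin l) ℤ, A = S * G * Sᵀ ∧ S * U * T ≠ S := by
    have key : ∀ S : Matrix (Fin k) (Fin l) ℤ, S * U * T = S →
        (S * U) * (T * G * Tᵀ) * (S * U)ᵀ = S * G * Sᵀ := by
      intro S hfac
      have e : (S * U) * (T * G * Tᵀ) * (S * U)ᵀ = (S * U * T) * G * (S * U * T)ᵀ := by
        simp only [Matrix.transpose_mul, Matrix.mul_assoc]
      rw [e, hfac]
    rcases hrep with ⟨⟨S, hS⟩, hnrep⟩ | ⟨⟨S, hS, V, hSV⟩, hnprep⟩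
    · refine ⟨S, hS, fun hfac => hnrep ⟨S * U, ?_⟩⟩
      rw [key S hfac, ← hS]
    · refine ⟨S, hS, fun hfac => hnprep ⟨S * U, by rw [key S hfac, ← hS], T * V, ?_⟩⟩
      calc S * U * (T * V) = (S * U * T) * V := by simp only [Matrix.mul_assoc]
        _ = 1 := by rw [hfac, hSV]
  -- minimal vectors of A and of M
  obtain ⟨v, hvli, hvQ⟩ : ∃ v : Fin k → (Fin k → ℤ), LinearIndependent ℤ v ∧
      ∀ j, Qf A (v j) ≤ ((mu A k : ℕ) : ℤ) := Nat.sInf_mem (mu_nonempty A (le_refl k))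
  obtain ⟨u, huli, huQ⟩ : ∃ u : Fin m → (Fin m → ℤ), LinearIndependent ℤ u ∧
      ∀ j, Qf (T * G * Tᵀ) (u j) ≤ ((mu (T * G * Tᵀ) m : ℕ) : ℤ) :=
    Nat.sInf_mem (mu_nonempty (T * G * Tᵀ) (le_refl m))
  -- some minimal vector of A maps outside the rational row span W of T
  have hout : ∃ j, castL l ((v j) ᵥ* S) ∉
      span ℚ (Set.range (T.map (Int.cast : ℤ → ℚ))) := by
    by_contra hcon
    push_neg at hcon
    apply hnot
    apply factor T U hTU S
    intro i
    have hvQli : LinearIndependent ℚ (fun j => castL k (v j)) :=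
      (LinearIndependent.iff_fractionRing ℤ ℚ).mp (hvli.map' (castL k) (castL_ker k))
    have hspan : span ℚ (Set.range fun j => castL k (v j)) = ⊤ :=
      hvQli.span_eq_top_of_card_eq_finrank (by simp)
    have hle : span ℚ (Set.range fun j => castL k (v j)) ≤
        Submodule.comap (S.map (Int.cast : ℤ → ℚ)).vecMulLinear
          (span ℚ (Set.range (T.map (Int.cast : ℤ → ℚ)))) := by
      rw [Submodule.span_le]
      rintro x hx
      obtain ⟨j, rfl⟩ := hx
      simp only [SetLike.mem_coe, Submodule.mem_comap, Matrix.vecMulLinear_apply]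
      rw [← castL_vecMul]
      exact hcon j
    rw [hspan] at hle
    have hfW := hle (Submodule.mem_top (x := (Pi.single i 1 : Fin k → ℚ)))
    rw [Submodule.mem_comap, Matrix.vecMulLinear_apply, Matrix.single_one_vecMul] at hfW
    rw [← castL_row]
    exact hfW
  obtain ⟨j0, hj0⟩ := hout
  -- p-adic style: assemble the m+1 vectors
  have hTq : T.map (Int.cast : ℤ → ℚ) * U.map (Int.cast : ℤ → ℚ) = 1 := by
    rw [← mapc_mul, hTU]
    ext i j
    simp [Matrix.map_apply, Matrix.one_apply, apply_ite (Int.cast : ℤ → ℚ)]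
  have hTinj : LinearMap.ker (T.map (Int.cast : ℤ → ℚ)).vecMulLinear = ⊥ := by
    rw [LinearMap.ker_eq_bot']
    intro x hx
    rw [Matrix.vecMulLinear_apply] at hx
    have h2 : (x ᵥ* T.map (Int.cast : ℤ → ℚ)) ᵥ* U.map (Int.cast : ℤ → ℚ)
        = (0 : Fin l → ℚ) ᵥ* U.map (Int.cast : ℤ → ℚ) := by rw [hx]
    rwa [Matrix.vecMul_vecMul, hTq, Matrix.vecMul_one, Matrix.zero_vecMul] at h2
  have hzW : ∀ j : Fin m, castL l ((u j) ᵥ* T) ∈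
      span ℚ (Set.range (T.map (Int.cast : ℤ → ℚ))) := by
    intro j
    have hmem : castL l ((u j) ᵥ* T) ∈
        LinearMap.range (T.map (Int.cast : ℤ → ℚ)).vecMulLinear :=
      ⟨castL m (u j), by rw [Matrix.vecMulLinear_apply, ← castL_vecMul]⟩
    rwa [_root_.range_vecMulLinear] at hmem
  have hzQli : LinearIndependent ℚ (fun j => castL l ((u j) ᵥ* T)) := by
    have h1 : LinearIndependent ℚ (fun j => castL m (u j)) :=
      (LinearIndependent.iff_fractionRing ℤ ℚ).mp (huli.map' (castL m) (castL_ker m))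
    have h2 := h1.map' (T.map (Int.cast : ℤ → ℚ)).vecMulLinear hTinj
    have he : (fun j => castL l ((u j) ᵥ* T))
        = (T.map (Int.cast : ℤ → ℚ)).vecMulLinear ∘ fun j => castL m (u j) := by
      funext j
      simp only [Function.comp, Matrix.vecMulLinear_apply]
      rw [castL_vecMul]
    rw [he]
    exact h2
  have hFli : LinearIndependent ℤ
      (Fin.cons ((v j0) ᵥ* S) (fun j => (u j) ᵥ* T) : Fin (m + 1) → Fin l → ℤ) := by
    have hQ : LinearIndependent ℚ
        ((castL l) ∘ (Fin.cons ((v j0) ᵥ* S) (fun j => (u j) ᵥ* T) : Fin (m + 1) → _)) := by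
      rw [Fin.comp_cons]
      refine linearIndependent_fin_cons.mpr ⟨hzQli, fun hmem => hj0 ?_⟩
      have hsub : span ℚ (Set.range ((castL l) ∘ fun j => (u j) ᵥ* T)) ≤
          span ℚ (Set.range (T.map (Int.cast : ℤ → ℚ))) := by
        rw [Submodule.span_le]
        rintro x hx
        obtain ⟨j, rfl⟩ := hx
        exact hzW j
      exact hsub hmem
    exact LinearIndependent.of_comp (castL l) ((LinearIndependent.iff_fractionRing ℤ ℚ).mpr hQ)
  have hFQ : ∀ j : Fin (m + 1),
      Qf G ((Fin.cons ((v j0) ᵥ* S) (fun j => (u j) ᵥ* T) : Fin (m + 1) → Fin l → ℤ) j)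
        ≤ ((max (mu A k) (mu (T * G * Tᵀ) m) : ℕ) : ℤ) := by
    intro j
    refine Fin.cases ?_ ?_ j
    · rw [Fin.cons_zero]
      have he : Qf G ((v j0) ᵥ* S) = Qf A (v j0) := by rw [hS, Qf_of_rep]
      rw [he]
      exact le_trans (hvQ j0) (Nat.cast_le.mpr (le_max_left _ _))
    · intro i
      rw [Fin.cons_succ]
      have he : Qf G ((u i) ᵥ* T) = Qf (T * G * Tᵀ) (u i) := by rw [Qf_of_rep]
      rw [he]
      exact le_trans (huQ i) (Nat.cast_le.mpr (le_max_right _ _))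
  exact Nat.sInf_le ⟨_, hFli, hFQ⟩


end Paper
end

section
/- Let p be a prime and let K be an anisotropic ℤ_p-lattice of positive rank. Then there exists a positive integer e (depending on K) such that Q(v) ∉ p^e ℤ_p for every vector v ∈ K \ pK; that is, K does not primitively represent any p-adic integer lying in p^e ℤ_p. -/
open Matrix

namespace Paper

/-- an anisotropic `ℤ_p`-lattice of positive rank does not primitively represent
any `p`-adic integer in `p^e ℤ_p`, for some positive `e` depending on the lattice. -/
theorem anisotropic_not_primitively_represent_small (p : ℕ) [Fact p.Prime] {m : ℕ}
    (hm : 0 < m) (G : Matrix (Fin m) (Fin m) ℤ_[p]) (hsymm : G.IsSymm)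
    (haniso : ∀ x : Fin m → ℚ_[p], Qf (G.map ((↑) : ℤ_[p] → ℚ_[p])) x = 0 → x = 0) :
    ∃ e : ℕ, 0 < e ∧ ∀ v : Fin m → ℤ_[p], (∃ i, ¬ (p : ℤ_[p]) ∣ v i) →
      ¬ ((p : ℤ_[p]) ^ e ∣ Qf G v) := by
  classical
  -- continuity of Qf G
  have hcont : Continuous (fun v : Fin m → ℤ_[p] => Qf G v) := by
    unfold Qf dotProduct Matrix.mulVec
    exact continuous_finset_sum _ fun i _ =>
      (continuous_apply i).mul (continuous_finset_sum _ fun j _ =>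
        continuous_const.mul (continuous_apply j))
  -- the set of primitive vectors
  set S : Set (Fin m → ℤ_[p]) := {v | ∃ i, ‖v i‖ = 1} with hS
  have hSclosed : IsClosed S := by
    have : S = ⋃ i : Fin m, {v : Fin m → ℤ_[p] | ‖v i‖ = 1} := by
      ext v; simp [hS, Set.mem_iUnion]
    rw [this]
    exact isClosed_iUnion_of_finite fun i =>
      isClosed_eq ((continuous_apply i).norm) continuous_const
  have hScompact : IsCompact S := hSclosed.isCompact
  have hSne : S.Nonempty := by
    refine ⟨Pi.single ⟨0, hm⟩ 1, ⟨⟨0, hm⟩, ?_⟩⟩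
    simp
  -- minimum of ‖Qf G v‖ on S
  obtain ⟨v₀, hv₀S, hv₀min⟩ := hScompact.exists_isMinOn hSne
    ((hcont.norm).continuousOn)
  -- Qf G v₀ ≠ 0
  have hv₀ne : Qf G v₀ ≠ 0 := by
    intro h0
    obtain ⟨i, hi⟩ := hv₀S
    have hcast : Qf (G.map ((↑) : ℤ_[p] → ℚ_[p])) (((↑) : ℤ_[p] → ℚ_[p]) ∘ v₀)
        = ((Qf G v₀ : ℤ_[p]) : ℚ_[p]) := by
      have h1 : PadicInt.Coe.ringHom (p := p) (v₀ ⬝ᵥ G *ᵥ v₀)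
          = (Subtype.val ∘ v₀) ⬝ᵥ (G.map Subtype.val *ᵥ (Subtype.val ∘ v₀)) := by
        rw [RingHom.map_dotProduct]
        congr 1
        funext i
        exact RingHom.map_mulVec _ _ _ i
      exact h1.symm
    have := haniso (((↑) : ℤ_[p] → ℚ_[p]) ∘ v₀) (by rw [hcast, h0]; simp)
    have : ((v₀ i : ℤ_[p]) : ℚ_[p]) = 0 := congrFun this i
    have : v₀ i = 0 := PadicInt.coe_eq_zero.mp this
    rw [this] at hi; simp at hi
  have hpos : 0 < ‖Qf G v₀‖ := norm_pos_iff.mpr hv₀ne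
  -- choose e
  have hplt : ‖(p : ℤ_[p])‖ < 1 := by
    rw [PadicInt.norm_p]
    exact inv_lt_one_of_one_lt₀ (by exact_mod_cast (Fact.out : p.Prime).one_lt)
  obtain ⟨n, hn⟩ := exists_pow_lt_of_lt_one hpos hplt
  refine ⟨n + 1, Nat.succ_pos n, fun v hv hdvd => ?_⟩
  have hvS : v ∈ S := by
    obtain ⟨i, hi⟩ := hv
    refine ⟨i, ?_⟩
    rcases lt_or_eq_of_le (PadicInt.norm_le_one (v i)) with h | h
    · exact absurd (PadicInt.norm_lt_one_iff_dvd _ |>.mp h) hi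
    · exact h
  have hle : ‖Qf G v‖ ≤ ‖(p : ℤ_[p])‖ ^ (n + 1) := by
    obtain ⟨c, hc⟩ := hdvd
    rw [hc]
    calc ‖(p : ℤ_[p]) ^ (n + 1) * c‖ = ‖(p : ℤ_[p]) ^ (n + 1)‖ * ‖c‖ :=
          norm_mul _ _
      _ ≤ ‖(p : ℤ_[p]) ^ (n + 1)‖ * 1 :=
          mul_le_mul_of_nonneg_left (PadicInt.norm_le_one c) (norm_nonneg _)
      _ = ‖(p : ℤ_[p])‖ ^ (n + 1) := by rw [mul_one, norm_pow]
  have hlt : ‖(p : ℤ_[p])‖ ^ (n + 1) < ‖Qf G v₀‖ :=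
    lt_of_le_of_lt (pow_le_pow_of_le_one (norm_nonneg _) hplt.le (Nat.le_succ n)) hn
  have := hv₀min hvS
  simp only [Set.mem_setOf_eq] at this
  exact absurd (lt_of_le_of_lt hle hlt) (not_lt.mpr this)

end Paper
end

section
/- Let L be a normalized lattice and p a prime such that Q(L_p) ≠ 2ℤ_p (i.e., the set of values of Q on L_p is not all of 2ℤ_p). Then Λ_{2p}(L_p) = {x ∈ L_p : Q(x) ∈ 2pℤ_p}. -/
open Matrix

namespace Paper

lemma dot_symm {R : Type*} [CommRing R] {m : ℕ} {G : Matrix (Fin m) (Fin m) R}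
    (hs : G.IsSymm) (x z : Fin m → R) : z ⬝ᵥ (G *ᵥ x) = x ⬝ᵥ (G *ᵥ z) := by
  rw [Matrix.dotProduct_mulVec, ← Matrix.mulVec_transpose, hs.eq, dotProduct_comm]

lemma qf_single {R : Type*} [CommRing R] {m : ℕ} (G : Matrix (Fin m) (Fin m) R)
    (i : Fin m) (c : R) : Qf G (Pi.single i c) = c * (G i i * c) := by
  simp [Qf, Matrix.mulVec_single, single_dotProduct]
  ring

lemma even_Qf {R : Type*} [CommRing R] {m : ℕ} (G : Matrix (Fin m) (Fin m) R)
    (hs : G.IsSymm) (hdiag : ∀ i, (2 : R) ∣ G i i) (v : Fin m → R) :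
    (2 : R) ∣ Qf G v := by
  have main : ∀ s : Finset (Fin m), (2 : R) ∣ Qf G (fun i => if i ∈ s then v i else 0) := by
    intro s
    induction s using Finset.induction_on with
    | empty => simp [Qf]
    | @insert a s ha ih =>
      have hdecomp : (fun i => if i ∈ insert a s then v i else 0)
          = Pi.single a (v a) + (fun i => if i ∈ s then v i else 0) := by
        funext i
        by_cases hia : i = a
        · subst hia; simp [ha]
        · simp [Pi.single, Function.update, hia]
      rw [hdecomp, Qf_add, dot_symm hs]
      have h1 : (2 : R) ∣ Qf G (Pi.single a (v a)) := by
        rw [qf_single]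
        exact Dvd.dvd.mul_left ((hdiag a).mul_right _) _
      have h2 : (2 : R) ∣ (fun i => if i ∈ s then v i else 0) ⬝ᵥ (G *ᵥ Pi.single a (v a))
          + (fun i => if i ∈ s then v i else 0) ⬝ᵥ (G *ᵥ Pi.single a (v a)) := by
        rw [← two_mul]; exact Dvd.intro _ rfl
      exact dvd_add (dvd_add h1 ih) h2
  have := main Finset.univ
  simpa using this

lemma hensel_quad (p : ℕ) [hp : Fact p.Prime] (a b c : ℤ_[p]) (hb : IsUnit b) :
    ∃ α : ℤ_[p], (p : ℤ_[p]) * a * α ^ 2 + b * α + c = 0 := by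
  obtain ⟨u, hu⟩ := hb
  set α₀ : ℤ_[p] := -((↑u⁻¹ : ℤ_[p]) * c) with hα₀
  set F : Polynomial ℤ_[p] := Polynomial.C ((p : ℤ_[p]) * a) * Polynomial.X ^ 2
      + Polynomial.C b * Polynomial.X + Polynomial.C c with hF
  have hFeval : ∀ x, F.eval x = (p : ℤ_[p]) * a * x ^ 2 + b * x + c := by
    intro x; simp [hF]
  have hFderiv : ∀ x, F.derivative.eval x = (p : ℤ_[p]) * a * (2 * x) + b := by
    intro x
    simp [hF, Polynomial.derivative_C_mul, Polynomial.derivative_X_pow]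
    exact Or.inl (Or.inl one_add_one_eq_two)
  have hbα : b * α₀ = -c := by
    rw [hα₀]
    have : b * ((↑u⁻¹ : ℤ_[p]) * c) = c := by
      rw [← mul_assoc, ← hu, u.mul_inv, one_mul]
    rw [mul_neg, this]
  have hpnorm : ‖(p : ℤ_[p])‖ < 1 := by
    rw [PadicInt.norm_p]
    rw [inv_lt_one_iff₀]
    right
    exact_mod_cast hp.out.one_lt
  have hevalnorm : ‖F.eval α₀‖ < 1 := by
    rw [hFeval]
    have : (p : ℤ_[p]) * a * α₀ ^ 2 + b * α₀ + c = (p : ℤ_[p]) * (a * α₀ ^ 2) := by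
      rw [hbα]; ring
    rw [this, norm_mul]
    calc ‖(p : ℤ_[p])‖ * ‖a * α₀ ^ 2‖ ≤ ‖(p : ℤ_[p])‖ * 1 :=
          mul_le_mul_of_nonneg_left (PadicInt.norm_le_one _) (norm_nonneg _)
      _ = ‖(p : ℤ_[p])‖ := mul_one _
      _ < 1 := hpnorm
  have hbnorm : ‖b‖ = 1 := PadicInt.isUnit_iff.mp ⟨u, hu⟩
  have hderivnorm : ‖F.derivative.eval α₀‖ = 1 := by
    rw [hFderiv]
    have h1 : ‖(p : ℤ_[p]) * a * (2 * α₀)‖ < 1 := by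
      rw [mul_assoc, norm_mul]
      calc ‖(p : ℤ_[p])‖ * ‖a * (2 * α₀)‖ ≤ ‖(p : ℤ_[p])‖ * 1 :=
            mul_le_mul_of_nonneg_left (PadicInt.norm_le_one _) (norm_nonneg _)
        _ = ‖(p : ℤ_[p])‖ := mul_one _
        _ < 1 := hpnorm
    have hne : ‖(p : ℤ_[p]) * a * (2 * α₀)‖ ≠ ‖b‖ := by rw [hbnorm]; exact ne_of_lt h1
    rw [PadicInt.norm_add_eq_max_of_ne hne, hbnorm]
    exact max_eq_right (le_of_lt (hbnorm ▸ h1))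
  have hnorm : ‖F.eval α₀‖ < ‖F.derivative.eval α₀‖ ^ 2 := by
    rw [hderivnorm, one_pow]; exact hevalnorm
  obtain ⟨z, hz, -⟩ := hensels_lemma hnorm
  exact ⟨z, by rw [Polynomial.coe_aeval_eq_eval, hFeval] at hz; exact hz⟩


/-- for a normalized lattice with `Q(L_p) ≠ 2ℤ_p`,
`Λ_{2p}(L_p) = {x ∈ L_p : Q(x) ∈ 2pℤ_p}`. -/
theorem lambda_two_p_eq (p : ℕ) [Fact p.Prime] {m : ℕ} (G : Matrix (Fin m) (Fin m) ℤ)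
    (hG : IsLat G) (hnorm : Normalized G) (hcond : ¬ QValuesFull p G) :
    Lambda (2 * p) (padic p G)
      = {x : Fin m → ℤ_[p] | ((2 * p : ℕ) : ℤ_[p]) ∣ Qf (padic p G) x} := by
  set G' := padic p G with hG'def
  have hsymm : G'.IsSymm := hG.1.map _
  have hdiag : ∀ i, (2 : ℤ_[p]) ∣ G' i i := by
    intro i
    have h1 : Qf G (Pi.single i 1) ∈ NormIdeal G :=
      Ideal.subset_span ⟨Pi.single i 1, rfl⟩
    rw [hnorm, Ideal.mem_span_singleton] at h1
    rw [qf_single, one_mul, mul_one] at h1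
    have h2 := map_dvd (Int.castRingHom ℤ_[p]) h1
    simpa [hG'def, padic, Matrix.map_apply] using h2
  have heven : ∀ v, (2 : ℤ_[p]) ∣ Qf G' v := even_Qf G' hsymm hdiag
  have hcast : ((2 * p : ℕ) : ℤ_[p]) = 2 * (p : ℤ_[p]) := by push_cast; ring
  have key : ∀ x : Fin m → ℤ_[p], ((2 * p : ℕ) : ℤ_[p]) ∣ Qf G' x →
      ∀ z, (p : ℤ_[p]) ∣ x ⬝ᵥ (G' *ᵥ z) := by
    intro x hx z
    by_contra hbdvd
    apply hcond
    set b := x ⬝ᵥ (G' *ᵥ z) with hb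
    have hbunit : IsUnit b := by
      rw [PadicInt.isUnit_iff]
      have h1 := PadicInt.norm_le_one b
      have h2 : ¬ ‖b‖ < 1 := fun h => hbdvd ((PadicInt.norm_lt_one_iff_dvd b).mp h)
      exact le_antisymm h1 (not_lt.mp h2)
    rw [hcast] at hx
    obtain ⟨a', ha'⟩ := hx
    obtain ⟨c', hc'⟩ := heven z
    unfold QValuesFull
    ext t
    simp only [Set.mem_range, Set.mem_setOf_eq]
    constructor
    · rintro ⟨v, rfl⟩; exact heven v
    · rintro ⟨t', rfl⟩
      obtain ⟨α, hα⟩ := hensel_quad p a' b (c' - t') hbunit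
      refine ⟨α • x + z, ?_⟩
      have hcross : (α • x) ⬝ᵥ (G' *ᵥ z) + z ⬝ᵥ (G' *ᵥ (α • x)) = 2 * (α * b) := by
        rw [dot_symm hsymm z (α • x), Matrix.mulVec_smul, dotProduct_smul,
          smul_eq_mul, dot_symm hsymm x z, ← hb]
        ring
      rw [Qf_add, Qf_smul, hcross, ha', hc']
      linear_combination 2 * hα
  ext x
  simp only [Lambda, Set.mem_setOf_eq]
  constructor
  · intro hx
    have h0 := hx 0
    simpa [Qf] using h0
  · intro hx z
    have hcross := key x hx z
    have e : Qf G' (x + z) - Qf G' z = Qf G' x + 2 * (x ⬝ᵥ (G' *ᵥ z)) := by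
      rw [Qf_add]
      rw [dot_symm hsymm z x]
      ring
    rw [e, hcast]
    refine dvd_add ?_ (mul_dvd_mul_left 2 hcross)
    rw [← hcast]
    exact hx

end Paper
end
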